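/- Let f be a monic integer polynomial of degree n with height at most H, and suppose f has exactly k roots (counted with multiplicity) whose modulus equals the maximum modulus r(f) of the roots of f. Then r(f)^k ≤ √(n+1) · H; in particular r(f) ≤ ((n+1)^{1/2} H)^{1/k}. -/

import Mathlib

open Polynomial Finset

noncomputable def n2 (f : Polynomial ℂ) : ℝ := ∑ i ∈ f.support, Complex.normSq (f.coeff i)

lemma n2_nonneg (f : Polynomial ℂ) : 0 ≤ n2 f :=
  Finset.sum_nonneg fun _ _ => Complex.normSq_nonneg _

lemma n2_eq (f : Polynomial ℂ) (N : ℕ) (h : f.natDegree < N) :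
    n2 f = ∑ i ∈ Finset.range N, Complex.normSq (f.coeff i) := by
  apply Finset.sum_subset
  · intro i hi
    exact Finset.mem_range.mpr (lt_of_le_of_lt (Polynomial.le_natDegree_of_mem_supp i hi) h)
  · intro i _ hi
    simp [Polynomial.notMem_support_iff.mp hi]

lemma coeff_le_n2 (f : Polynomial ℂ) (i : ℕ) : Complex.normSq (f.coeff i) ≤ n2 f := by
  by_cases h : i ∈ f.support
  · exact Finset.single_le_sum (fun j _ => Complex.normSq_nonneg _) h
  · simp only [Polynomial.notMem_support_iff.mp h, map_zero]
    exact n2_nonneg f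

lemma key_pt (α a b : ℂ) :
    Complex.normSq (a - α * b) - Complex.normSq ((starRingEnd ℂ) α * a - b)
      = (1 - Complex.normSq α) * (Complex.normSq a - Complex.normSq b) := by
  simp only [Complex.normSq_apply, Complex.sub_re, Complex.sub_im, Complex.mul_re,
    Complex.mul_im, Complex.conj_re, Complex.conj_im]
  ring

lemma n2_swap (α : ℂ) (g : Polynomial ℂ) :
    n2 ((X - C α) * g) = n2 ((C ((starRingEnd ℂ) α) * X - 1) * g) := by
  set d := g.natDegree with hd
  have h1 : ((X - C α) * g).natDegree < d + 2 := by
    have : ((X - C α) * g).natDegree ≤ 1 + d := natDegree_mul_le.trans (by simp [natDegree_X_sub_C, hd])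
    omega
  have h2 : ((C ((starRingEnd ℂ) α) * X - 1) * g).natDegree < d + 2 := by
    have hb : (C ((starRingEnd ℂ) α) * X - 1).natDegree ≤ 1 := by
      refine (natDegree_sub_le _ _).trans ?_
      simp only [natDegree_one]
      refine max_le ((natDegree_C_mul_le _ _).trans ?_) ?_ <;> simp
    have : ((C ((starRingEnd ℂ) α) * X - 1) * g).natDegree ≤ 1 + d :=
      natDegree_mul_le.trans (by omega)
    omega
  rw [n2_eq _ (d + 2) h1, n2_eq _ (d + 2) h2]
  have c1 : ∀ j, ((X - C α) * g).coeff (j + 1) = g.coeff j - α * g.coeff (j + 1) := by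
    intro j
    rw [sub_mul, coeff_sub, coeff_X_mul, coeff_C_mul]
  have c10 : ((X - C α) * g).coeff 0 = -(α * g.coeff 0) := by
    rw [sub_mul, coeff_sub, mul_coeff_zero, mul_coeff_zero, coeff_X_zero, coeff_C]
    simp
  have c2 : ∀ j, ((C ((starRingEnd ℂ) α) * X - 1) * g).coeff (j + 1)
      = (starRingEnd ℂ) α * g.coeff j - g.coeff (j + 1) := by
    intro j
    rw [sub_mul, coeff_sub, one_mul, mul_assoc, coeff_C_mul, coeff_X_mul]
  have c20 : ((C ((starRingEnd ℂ) α) * X - 1) * g).coeff 0 = -(g.coeff 0) := by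
    rw [sub_mul, coeff_sub, one_mul, mul_assoc, mul_coeff_zero, coeff_C, mul_coeff_zero,
      coeff_X_zero]
    simp
  rw [Finset.sum_range_succ' _ (d + 1), Finset.sum_range_succ' _ (d + 1)]
  simp only [c1, c10, c2, c20, Complex.normSq_neg, Complex.normSq_mul]
  have hg : g.coeff (d + 1) = 0 := coeff_eq_zero_of_natDegree_lt (by omega)
  have tele : ∑ j ∈ Finset.range (d + 1),
      (Complex.normSq (g.coeff j - α * g.coeff (j + 1))
        - Complex.normSq ((starRingEnd ℂ) α * g.coeff j - g.coeff (j + 1)))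
      = (1 - Complex.normSq α) * Complex.normSq (g.coeff 0) := by
    have := Finset.sum_range_sub' (fun j => (1 - Complex.normSq α) * Complex.normSq (g.coeff j))
      (d + 1)
    calc ∑ j ∈ Finset.range (d + 1),
        (Complex.normSq (g.coeff j - α * g.coeff (j + 1))
          - Complex.normSq ((starRingEnd ℂ) α * g.coeff j - g.coeff (j + 1)))
        = ∑ j ∈ Finset.range (d + 1),
          ((1 - Complex.normSq α) * Complex.normSq (g.coeff j)
            - (1 - Complex.normSq α) * Complex.normSq (g.coeff (j + 1))) := by
          refine Finset.sum_congr rfl fun j _ => ?_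
          rw [key_pt]; ring
      _ = (1 - Complex.normSq α) * Complex.normSq (g.coeff 0)
            - (1 - Complex.normSq α) * Complex.normSq (g.coeff (d + 1)) := this
      _ = (1 - Complex.normSq α) * Complex.normSq (g.coeff 0) := by rw [hg]; simp
  rw [Finset.sum_sub_distrib] at tele
  linarith

lemma landau (s : Multiset ℂ) (c : ℂ) :
    Complex.normSq c * (s.map (fun α => max 1 (Complex.normSq α))).prod
      ≤ n2 (C c * (s.map (fun α => X - C α)).prod) := by
  classical
  set N := Multiset.card (s.filter (fun α => 1 < Complex.normSq α)) with hN
  clear_value N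
  induction N generalizing s c with
  | zero =>
    have hall : ∀ α ∈ s, ¬ (1 < Complex.normSq α) := by
      intro α hα hlt
      have : α ∈ s.filter (fun α => 1 < Complex.normSq α) := Multiset.mem_filter.mpr ⟨hα, hlt⟩
      have := Multiset.card_pos_iff_exists_mem.mpr ⟨α, this⟩
      omega
    have hprod : (s.map (fun α => max 1 (Complex.normSq α))).prod = 1 := by
      apply Multiset.prod_eq_one
      intro x hx
      obtain ⟨α, hα, rfl⟩ := Multiset.mem_map.mp hx
      exact max_eq_left (le_of_not_gt (hall α hα))
    rw [hprod, mul_one]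
    set p := C c * (s.map (fun α => X - C α)).prod with hp
    have hmon : (s.map (fun α => X - C α)).prod.Monic := by
      apply monic_multiset_prod_of_monic
      intro α _
      exact monic_X_sub_C α
    have hlc : p.coeff p.natDegree = c := by
      rw [coeff_natDegree, hp, leadingCoeff_mul, leadingCoeff_C, hmon.leadingCoeff, mul_one]
    calc Complex.normSq c = Complex.normSq (p.coeff p.natDegree) := by rw [hlc]
      _ ≤ n2 p := coeff_le_n2 p _
  | succ N ih =>
    have hpos : 0 < Multiset.card (s.filter (fun α => 1 < Complex.normSq α)) := by omega
    obtain ⟨α, hαf⟩ := Multiset.card_pos_iff_exists_mem.mp hpos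
    obtain ⟨hαs, hα1⟩ := Multiset.mem_filter.mp hαf
    set t := s.erase α with ht
    have hst : α ::ₘ t = s := Multiset.cons_erase hαs
    have hα0 : α ≠ 0 := by
      intro h
      rw [h] at hα1
      norm_num at hα1
    have hca0 : (starRingEnd ℂ) α ≠ 0 := by simpa using hα0
    set β := ((starRingEnd ℂ) α)⁻¹ with hβ
    have hnsβ : Complex.normSq β = (Complex.normSq α)⁻¹ := by
      rw [hβ, map_inv₀, Complex.normSq_conj]
    have hβ1 : ¬ (1 < Complex.normSq β) := by
      rw [hnsβ]
      rw [not_lt]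
      rw [inv_le_one_iff₀]
      right; linarith
    have hcard : Multiset.card (t.filter (fun α => 1 < Complex.normSq α)) = N := by
      have : Multiset.card ((α ::ₘ t).filter (fun α => 1 < Complex.normSq α)) = N + 1 := by
        rw [hst]; omega
      rw [show (α ::ₘ t).filter (fun α => 1 < Complex.normSq α)
          = α ::ₘ t.filter (fun α => 1 < Complex.normSq α) from
        Multiset.filter_cons_of_pos _ hα1] at this
      simpa using this
    have hcard' : Multiset.card ((β ::ₘ t).filter (fun α => 1 < Complex.normSq α)) = N := by
      rw [show (β ::ₘ t).filter (fun α => 1 < Complex.normSq α)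
          = t.filter (fun α => 1 < Complex.normSq α) from
        Multiset.filter_cons_of_neg _ hβ1, hcard]
    have key := ih (β ::ₘ t) (c * (starRingEnd ℂ) α) hcard'.symm
    -- rewrite the RHS polynomial of `key`
    have hfac : C ((starRingEnd ℂ) α) * (X - C β) = C ((starRingEnd ℂ) α) * X - 1 := by
      rw [mul_sub, ← C_mul, hβ, mul_inv_cancel₀ hca0, C_1]
    have hpoly : C (c * (starRingEnd ℂ) α) * ((β ::ₘ t).map (fun α => X - C α)).prod
        = (C ((starRingEnd ℂ) α) * X - 1) * (C c * (t.map (fun α => X - C α)).prod) := by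
      calc C (c * (starRingEnd ℂ) α) * ((β ::ₘ t).map (fun α => X - C α)).prod
          = (C ((starRingEnd ℂ) α) * (X - C β)) * (C c * (t.map (fun α => X - C α)).prod) := by
            rw [Multiset.map_cons, Multiset.prod_cons, map_mul]; ring
        _ = (C ((starRingEnd ℂ) α) * X - 1) * (C c * (t.map (fun α => X - C α)).prod) := by
            rw [hfac]
    rw [hpoly, ← n2_swap] at key
    have hpoly2 : (X - C α) * (C c * (t.map (fun α => X - C α)).prod)
        = C c * (s.map (fun α => X - C α)).prod := by
      rw [← hst, Multiset.map_cons, Multiset.prod_cons]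
      ring
    rw [hpoly2] at key
    refine le_trans (le_of_eq ?_) key
    rw [← hst, Multiset.map_cons, Multiset.prod_cons, Multiset.map_cons, Multiset.prod_cons,
      Complex.normSq_mul, Complex.normSq_conj]
    have h1 : max 1 (Complex.normSq α) = Complex.normSq α := max_eq_right (le_of_lt hα1)
    have h2 : max 1 (Complex.normSq β) = 1 := max_eq_left (le_of_not_gt hβ1)
    rw [h1, h2]
    ring

theorem stmt3 (f : Polynomial ℤ) (n : ℕ) (hm : f.Monic) (hdeg : f.natDegree = n)
    (hn : 1 ≤ n) (H : ℝ) (hH : ∀ i, |(f.coeff i : ℝ)| ≤ H)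
    (r : ℝ) (k : ℕ)
    (hr : ∀ z ∈ (f.map (Int.castRingHom ℂ)).roots, ‖z‖ ≤ r)
    (hattain : ∃ z ∈ (f.map (Int.castRingHom ℂ)).roots, ‖z‖ = r)
    (hk : ((f.map (Int.castRingHom ℂ)).roots.filter
      (fun z => ‖z‖ = r)).card = k) :
    r ^ k ≤ Real.sqrt (n + 1) * H ∧ r ≤ (Real.sqrt (n + 1) * H) ^ ((1 : ℝ) / k) := by
  classical
  set F := f.map (Int.castRingHom ℂ) with hF
  have hFm : F.Monic := hm.map _
  have hFdeg : F.natDegree = n := by rw [hF, hm.natDegree_map, hdeg]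
  obtain ⟨z0, hz0, hz0r⟩ := hattain
  have hr0 : 0 ≤ r := hz0r ▸ norm_nonneg z0
  have hH1 : (1 : ℝ) ≤ H := by
    have h1 := hH n
    have h2 : f.coeff n = 1 := by rw [← hdeg, coeff_natDegree, hm.leadingCoeff]
    rw [h2] at h1
    simpa using h1
  have hs1 : (1 : ℝ) ≤ Real.sqrt (n + 1) := by
    have h := Real.sqrt_le_sqrt (show (1 : ℝ) ≤ (n : ℝ) + 1 by linarith [Nat.cast_nonneg (α := ℝ) n])
    simpa using h
  have hsplit : F = (F.roots.map fun a => X - C a).prod :=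
    (IsAlgClosed.splits F).eq_prod_roots_of_monic hFm
  have hland := landau F.roots 1
  rw [C_1, one_mul, ← hsplit, map_one, one_mul] at hland
  have hn2 : n2 F ≤ (n + 1) * H ^ 2 := by
    rw [n2_eq F (n + 1) (by omega)]
    calc ∑ i ∈ Finset.range (n + 1), Complex.normSq (F.coeff i)
        ≤ ∑ _i ∈ Finset.range (n + 1), H ^ 2 := by
          refine Finset.sum_le_sum fun i _ => ?_
          rw [hF, coeff_map]
          have he : Complex.normSq ((Int.castRingHom ℂ) (f.coeff i)) = ((f.coeff i : ℝ)) ^ 2 := by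
            simp [Complex.normSq_apply]
            ring
          rw [he]
          calc ((f.coeff i : ℝ)) ^ 2 = |(f.coeff i : ℝ)| ^ 2 := (sq_abs _).symm
            _ ≤ H ^ 2 := pow_le_pow_left₀ (abs_nonneg _) (hH i) 2
      _ = (n + 1) * H ^ 2 := by
          rw [Finset.sum_const, Finset.card_range, nsmul_eq_mul]
          push_cast; ring
  have hk1 : 1 ≤ k := by
    have : z0 ∈ F.roots.filter (fun z => ‖z‖ = r) :=
      Multiset.mem_filter.mpr ⟨hz0, hz0r⟩
    have := Multiset.card_pos_iff_exists_mem.mpr ⟨z0, this⟩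
    omega
  have hmain : r ^ k ≤ Real.sqrt (n + 1) * H := by
    by_cases hr1 : 1 ≤ r
    · have key : (r ^ 2) ^ k ≤ (F.roots.map (fun α => max 1 (Complex.normSq α))).prod := by
        conv_rhs => rw [← Multiset.filter_add_not (fun z => ‖z‖ = r) F.roots]
        rw [Multiset.map_add, Multiset.prod_add]
        have e1 : ((F.roots.filter (fun z => ‖z‖ = r)).map
            (fun α => max 1 (Complex.normSq α))).prod = (r ^ 2) ^ k := by
          have hall : ∀ x ∈ (F.roots.filter (fun z => ‖z‖ = r)).map
              (fun α => max 1 (Complex.normSq α)), x = r ^ 2 := by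
            intro x hx
            obtain ⟨z, hz, rfl⟩ := Multiset.mem_map.mp hx
            have hzr : ‖z‖ = r := (Multiset.mem_filter.mp hz).2
            have hns : Complex.normSq z = r ^ 2 := by rw [← Complex.sq_norm, hzr]
            rw [hns, max_eq_right (by nlinarith)]
          rw [Multiset.eq_replicate_card.mpr hall, Multiset.prod_replicate, Multiset.card_map,
            hk]
        have e2 : (1 : ℝ) ≤ ((F.roots.filter (fun z => ¬ ‖z‖ = r)).map
            (fun α => max 1 (Complex.normSq α))).prod := by
          apply Multiset.one_le_prod
          intro x hx
          obtain ⟨z, _, rfl⟩ := Multiset.mem_map.mp hx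
          exact le_max_left _ _
        rw [← e1]
        exact le_mul_of_one_le_right (Multiset.prod_nonneg (by
          intro x hx
          obtain ⟨z, _, rfl⟩ := Multiset.mem_map.mp hx
          exact le_trans zero_le_one (le_max_left _ _))) e2
      have h2 : (r ^ k) ^ 2 ≤ (n + 1) * H ^ 2 := by
        have he : (r ^ 2) ^ k = (r ^ k) ^ 2 := by ring
        have := key.trans (hland.trans hn2)
        linarith [he ▸ this]
      calc r ^ k = Real.sqrt ((r ^ k) ^ 2) := (Real.sqrt_sq (pow_nonneg hr0 k)).symm
        _ ≤ Real.sqrt ((n + 1) * H ^ 2) := Real.sqrt_le_sqrt h2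
        _ = Real.sqrt (n + 1) * H := by
            rw [Real.sqrt_mul (by positivity), Real.sqrt_sq (by linarith)]
    · have h1 : r ^ k ≤ 1 := pow_le_one₀ hr0 (le_of_not_ge hr1)
      nlinarith
  refine ⟨hmain, ?_⟩
  have hkR : (k : ℝ) ≠ 0 := by positivity
  have hrw : r = (r ^ k) ^ ((1 : ℝ) / k) := by
    rw [← Real.rpow_natCast r k, ← Real.rpow_mul hr0]
    rw [mul_one_div_cancel hkR, Real.rpow_one]
  calc r = (r ^ k) ^ ((1 : ℝ) / k) := hrw
    _ ≤ (Real.sqrt (n + 1) * H) ^ ((1 : ℝ) / k) :=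
        Real.rpow_le_rpow (pow_nonneg hr0 k) hmain (by positivity)
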